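/- Suppose φ : ℝ → ℝ is a continuous, 2π-periodic function with zero mean satisfying, for some μ > 0 and a > 0 and for all x, y ∈ ℝ: (1/2)(φ(x) - φ(y))^2 ≤ |(K*φ)(x) - (K*φ)(y)|, where K*φ is a-Hölder continuous with Hölder constant C. Then φ is (a/2)-Hölder continuous with |φ(x) - φ(y)| ≤ √(2C)·|x - y|^{a/2} for all x, y. -/
import Mathlib

open Real

/-- If `φ` is continuous, `2π`-periodic with zero mean and satisfies
`(1/2)(φ x - φ y)² ≤ |g x - g y|` where `g = K*φ` is `a`-Hölder with constant `C`,
then `φ` is `(a/2)`-Hölder with constant `√(2C)`. -/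
theorem stmt9 (φ g : ℝ → ℝ) (μ a C : ℝ) (hμ : 0 < μ) (ha : 0 < a)
    (hφcont : Continuous φ) (hφper : Function.Periodic φ (2 * π))
    (hφmean : (∫ x in (-π)..π, φ x) = 0)
    (hgHolder : ∀ x y : ℝ, |g x - g y| ≤ C * |x - y| ^ a)
    (hkey : ∀ x y : ℝ, (1 / 2) * (φ x - φ y) ^ 2 ≤ |g x - g y|) :
    ∀ x y : ℝ, |φ x - φ y| ≤ Real.sqrt (2 * C) * |x - y| ^ (a / 2) := by
  intro x y
  have h1 : (φ x - φ y) ^ 2 ≤ 2 * C * |x - y| ^ a := by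
    have := (hkey x y).trans (hgHolder x y); linarith
  have h2 : |φ x - φ y| = Real.sqrt ((φ x - φ y) ^ 2) := (Real.sqrt_sq_eq_abs _).symm
  rw [h2]
  calc Real.sqrt ((φ x - φ y) ^ 2) ≤ Real.sqrt (2 * C * |x - y| ^ a) :=
        Real.sqrt_le_sqrt h1
    _ = Real.sqrt (2 * C) * Real.sqrt (|x - y| ^ a) := Real.sqrt_mul' _ (by positivity)
    _ = Real.sqrt (2 * C) * |x - y| ^ (a / 2) := by
        congr 1
        rw [show a / 2 = a * (1 / 2) by ring, Real.rpow_mul (abs_nonneg _),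
          Real.sqrt_eq_rpow]
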